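/- Let Π = {Π_y} be a γ-disconnected grouping PVM built from a γ-disconnected partition {X_z} of X_+ via Π_z = Σ_{x∈X_z} P_x. Then Π is the maximal γ-commuting projective post-processing of P if and only if the partition {X_z} is irreducible. -/

import Mathlib

open Matrix BigOperators Filter
open scoped ComplexOrder Kronecker Classical

abbrev Mat (d : ℕ) := Matrix (Fin d) (Fin d) ℂ

def IsPOVM {X : Type*} [Fintype X] {d : ℕ} (P : X → Mat d) : Prop :=
  (∀ x, (P x).PosSemidef) ∧ ∑ x, P x = 1

def IsPVM {X : Type*} [Fintype X] {d : ℕ} (P : X → Mat d) : Prop :=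
  IsPOVM P ∧ (∀ x, P x * P x = P x) ∧ ∀ x y, x ≠ y → P x * P y = 0

def IsDensity {d : ℕ} (ρ : Mat d) : Prop := ρ.PosSemidef ∧ ρ.trace = 1

/-- `Q ⪯ P`: `Q` is a classical post-processing of `P`. -/
def IsPostProcessingOf {Y X : Type*} [Fintype Y] [Fintype X] {d : ℕ}
    (Q : Y → Mat d) (P : X → Mat d) : Prop :=
  ∃ p : X → Y → ℝ, (∀ x y, 0 ≤ p x y) ∧ (∀ x, ∑ y, p x y = 1) ∧
    ∀ y, Q y = ∑ x, (p x y : ℂ) • P x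

/-- The support of the POVM: `X₊ = {x : P x ≠ 0}`. -/
noncomputable def Xplus {X : Type*} [Fintype X] {d : ℕ} (P : X → Mat d) : Finset X :=
  Finset.univ.filter (fun x => P x ≠ 0)

/-- A partition of `X₊` is γ-disconnected if elements of distinct blocks are
mutually orthogonal and γ-orthogonal. -/
def GammaDisconnected {X : Type*} [Fintype X] [DecidableEq X] {d : ℕ}
    (P : X → Mat d) (γ : Mat d) (Prt : Finpartition (Xplus P)) : Prop :=
  ∀ s ∈ Prt.parts, ∀ t ∈ Prt.parts, s ≠ t →
    ∀ x ∈ s, ∀ x' ∈ t, P x * P x' = 0 ∧ P x * γ * P x' = 0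

/-- `A` is finer than `B` (refines `B`): every block of `A` lies in a block of `B`. -/
def FinerThan {α : Type*} [DecidableEq α] {a : Finset α} (A B : Finpartition a) : Prop :=
  ∀ s ∈ A.parts, ∃ t ∈ B.parts, s ⊆ t

/-- A γ-disconnected partition is irreducible if every strict refinement of it
fails to be γ-disconnected. -/
def IrreducibleDisconnected {X : Type*} [Fintype X] [DecidableEq X] {d : ℕ}
    (P : X → Mat d) (γ : Mat d) (Prt : Finpartition (Xplus P)) : Prop :=
  GammaDisconnected P γ Prt ∧
    ∀ Qrt : Finpartition (Xplus P), FinerThan Qrt Prt → Qrt ≠ Prt → ¬ GammaDisconnected P γ Qrt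

/-- `Pv` is a maximal γ-commuting projective post-processing (MPPP) of `P`:
a PVM, a classical post-processing of `P`, commuting with `γ`, and maximal
among all such PVMs with respect to classical post-processing. -/
def IsMPPP {Y X : Type*} [Fintype Y] [Fintype X] {d : ℕ}
    (Pv : Y → Mat d) (P : X → Mat d) (γ : Mat d) : Prop :=
  IsPVM Pv ∧ (∀ y, Pv y * γ = γ * Pv y) ∧ IsPostProcessingOf Pv P ∧
    ∀ (Y' : Type) [Fintype Y'] (Pv' : Y' → Mat d),
      IsPVM Pv' → (∀ y, Pv' y * γ = γ * Pv' y) → IsPostProcessingOf Pv' P →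
        IsPostProcessingOf Pv' Pv

/-! ### Auxiliary linear-algebra lemmas -/

private lemma sum_mulVec' {X : Type*} {d : ℕ} (s : Finset X) (A : X → Mat d) (v : Fin d → ℂ) :
    (∑ x ∈ s, A x) *ᵥ v = ∑ x ∈ s, A x *ᵥ v := by
  funext i
  simp only [Matrix.mulVec, dotProduct, Matrix.sum_apply, Finset.sum_apply, Finset.sum_mul]
  rw [Finset.sum_comm]

private lemma dotProduct_sum' {X : Type*} {d : ℕ} (s : Finset X) (w : Fin d → ℂ)
    (u : X → Fin d → ℂ) : w ⬝ᵥ (∑ x ∈ s, u x) = ∑ x ∈ s, w ⬝ᵥ u x := by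
  simp only [dotProduct, Finset.sum_apply, Finset.mul_sum]
  rw [Finset.sum_comm]

private lemma mat_zero_of_mulVec {d : ℕ} {M : Mat d} (h : ∀ v, M *ᵥ v = 0) : M = 0 := by
  ext i j
  have := congrFun (h (Pi.single j 1)) i
  simpa [Matrix.mulVec_single] using this

private lemma kernel_lemma {X : Type*} [Fintype X] {d : ℕ} {P : X → Mat d}
    (hP : ∀ x, (P x).PosSemidef) (s : Finset X) (c : X → ℝ) (hc : ∀ x, 0 ≤ c x)
    (v : Fin d → ℂ) (hv : (∑ x ∈ s, (c x : ℂ) • P x) *ᵥ v = 0) :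
    ∀ x ∈ s, c x ≠ 0 → P x *ᵥ v = 0 := by
  have h0 : ∑ x ∈ s, (c x : ℂ) * (star v ⬝ᵥ P x *ᵥ v) = 0 := by
    have := congrArg (fun w => star v ⬝ᵥ w) hv
    simpa [sum_mulVec', dotProduct_sum', Matrix.smul_mulVec,
      dotProduct_smul, smul_eq_mul] using this
  rw [Finset.sum_eq_zero_iff_of_nonneg (fun x _ =>
    mul_nonneg (by exact_mod_cast hc x) ((hP x).dotProduct_mulVec_nonneg v))] at h0
  intro x hx hcx
  have h1 : star v ⬝ᵥ P x *ᵥ v = 0 := by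
    rcases mul_eq_zero.mp (h0 x hx) with h | h
    · exact absurd (by exact_mod_cast h) hcx
    · exact h
  exact ((hP x).dotProduct_mulVec_zero_iff v).mp h1

private lemma proj_dichotomy {X : Type*} [Fintype X] {d : ℕ} {P : X → Mat d}
    (hP : ∀ x, (P x).PosSemidef) (hsum : ∑ x, P x = 1)
    {E : Mat d} (hEh : E.IsHermitian) (hEE : E * E = E)
    {c : X → ℝ} (hc0 : ∀ x, 0 ≤ c x) (hc1 : ∀ x, c x ≤ 1)
    (hE : E = ∑ x, (c x : ℂ) • P x) (x : X) :
    E * P x = P x ∨ E * P x = 0 := by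
  have h1E : (1 : Mat d) - E = ∑ x, ((1 - c x : ℝ) : ℂ) • P x := by
    push_cast
    simp only [sub_smul, one_smul, Finset.sum_sub_distrib, hsum, ← hE]
  have hker2 : c x ≠ 1 → P x * E = 0 := by
    intro h
    apply mat_zero_of_mulVec
    intro v
    have h0 : ((1 : Mat d) - E) *ᵥ (E *ᵥ v) = 0 := by
      rw [Matrix.mulVec_mulVec, sub_mul, one_mul, hEE, sub_self, Matrix.zero_mulVec]
    have := kernel_lemma hP Finset.univ (fun y => 1 - c y)
      (fun y => by simpa using sub_nonneg.mpr (hc1 y)) (E *ᵥ v) (by rw [← h1E]; exact h0) x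
      (Finset.mem_univ x) (sub_ne_zero.mpr (Ne.symm h))
    rw [← Matrix.mulVec_mulVec]
    exact this
  have hker1 : c x ≠ 0 → P x * ((1 : Mat d) - E) = 0 := by
    intro h
    apply mat_zero_of_mulVec
    intro v
    have h0 : E *ᵥ (((1 : Mat d) - E) *ᵥ v) = 0 := by
      rw [Matrix.mulVec_mulVec, mul_sub, mul_one, hEE, sub_self, Matrix.zero_mulVec]
    have := kernel_lemma hP Finset.univ c hc0 (((1 : Mat d) - E) *ᵥ v)
      (by rw [← hE]; exact h0) x (Finset.mem_univ x) h
    rw [← Matrix.mulVec_mulVec]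
    exact this
  by_cases h1 : c x = 1
  · left
    have h2 : P x * E = P x := by
      have := hker1 (by rw [h1]; norm_num)
      rw [mul_sub, mul_one, sub_eq_zero] at this
      exact this.symm
    calc E * P x = (P x * E).conjTranspose := by
          rw [Matrix.conjTranspose_mul, hEh.eq, (hP x).1.eq]
      _ = (P x).conjTranspose := by rw [h2]
      _ = P x := (hP x).1.eq
  by_cases h0 : c x = 0
  · right
    have h2 : P x * E = 0 := hker2 (by rw [h0]; norm_num)
    calc E * P x = (P x * E).conjTranspose := by
          rw [Matrix.conjTranspose_mul, hEh.eq, (hP x).1.eq]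
      _ = 0 := by rw [h2, Matrix.conjTranspose_zero]
  · right
    have hPx : P x = 0 := by
      have ha := hker1 h0
      have hb := hker2 h1
      have h2 : P x * ((1 : Mat d) - E) + P x * E = P x * 1 := by
        rw [← mul_add, sub_add_cancel]
      have : P x * 1 = 0 := by rw [← h2, ha, hb, add_zero]
      simpa using this
    rw [hPx, mul_zero]

/-! ### Grouping operator lemmas -/

section Grouping
variable {X : Type*} [Fintype X] [DecidableEq X] {d : ℕ} {P : X → Mat d} {γ : Mat d}
  {Q : Finpartition (Xplus P)}

omit [DecidableEq X] in
private lemma mem_Xplus_iff {x : X} : x ∈ Xplus P ↔ P x ≠ 0 := by simp [Xplus]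

private lemma g_sum (hP : IsPOVM P) (Q : Finpartition (Xplus P)) :
    ∑ s : {t // t ∈ Q.parts}, ∑ x ∈ s.1, P x = 1 := by
  rw [show (∑ s : {t // t ∈ Q.parts}, ∑ x ∈ s.1, P x) = ∑ s ∈ Q.parts, ∑ x ∈ s, P x from
    (Finset.sum_subtype (p := fun t => t ∈ Q.parts) Q.parts (fun _ => Iff.rfl)
      (fun t => ∑ x ∈ t, P x)).symm]
  have h1 : ∑ s ∈ Q.parts, ∑ x ∈ s, P x = ∑ x ∈ Q.parts.biUnion id, P x :=
    (Finset.sum_biUnion Q.disjoint).symm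
  rw [h1, Q.biUnion_parts]
  rw [Finset.sum_subset (Finset.subset_univ _)
    (fun x _ hx => by simpa [Xplus] using hx)]
  exact hP.2

private lemma g_zero (hdisc : GammaDisconnected P γ Q) {s t : Finset X}
    (hs : s ∈ Q.parts) (ht : t ∈ Q.parts) (hst : s ≠ t) :
    (∑ x ∈ s, P x) * (∑ x' ∈ t, P x') = 0 := by
  rw [Finset.sum_mul_sum]
  exact Finset.sum_eq_zero fun x hx => Finset.sum_eq_zero fun x' hx' =>
    (hdisc s hs t ht hst x hx x' hx').1

private lemma g_zero_gamma (hdisc : GammaDisconnected P γ Q) {s t : Finset X}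
    (hs : s ∈ Q.parts) (ht : t ∈ Q.parts) (hst : s ≠ t) :
    (∑ x ∈ s, P x) * γ * (∑ x' ∈ t, P x') = 0 := by
  rw [Finset.sum_mul, Finset.sum_mul_sum]
  exact Finset.sum_eq_zero fun x hx => Finset.sum_eq_zero fun x' hx' =>
    (hdisc s hs t ht hst x hx x' hx').2

private lemma g_idem (hP : IsPOVM P) (hdisc : GammaDisconnected P γ Q) {s : Finset X}
    (hs : s ∈ Q.parts) :
    (∑ x ∈ s, P x) * (∑ x ∈ s, P x) = ∑ x ∈ s, P x := by
  have key : (∑ x ∈ s, P x) * (1 : Mat d) = (∑ x ∈ s, P x) * (∑ x ∈ s, P x) := by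
    rw [← g_sum hP Q, Finset.mul_sum]
    exact Finset.sum_eq_single_of_mem (⟨s, hs⟩ : {t // t ∈ Q.parts}) (Finset.mem_univ _)
      (fun t _ hts => g_zero hdisc hs t.2 (fun h => hts (Subtype.ext h.symm)))
  rw [← key, mul_one]

private lemma g_comm (hP : IsPOVM P) (hdisc : GammaDisconnected P γ Q) {s : Finset X}
    (hs : s ∈ Q.parts) :
    (∑ x ∈ s, P x) * γ = γ * (∑ x ∈ s, P x) := by
  have hl : (∑ x ∈ s, P x) * γ * (1 : Mat d) = (∑ x ∈ s, P x) * γ * (∑ x ∈ s, P x) := by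
    rw [← g_sum hP Q, Finset.mul_sum]
    exact Finset.sum_eq_single_of_mem (⟨s, hs⟩ : {t // t ∈ Q.parts}) (Finset.mem_univ _)
      (fun t _ hts => g_zero_gamma hdisc hs t.2 (fun h => hts (Subtype.ext h.symm)))
  have hr : (1 : Mat d) * (γ * (∑ x ∈ s, P x)) = (∑ x ∈ s, P x) * γ * (∑ x ∈ s, P x) := by
    rw [← g_sum hP Q, Finset.sum_mul]
    have hassoc : ∀ t : {t // t ∈ Q.parts}, (∑ x ∈ t.1, P x) * (γ * (∑ x ∈ s, P x))
        = (∑ x ∈ t.1, P x) * γ * (∑ x ∈ s, P x) := fun t => (mul_assoc _ _ _).symm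
    simp_rw [hassoc]
    exact Finset.sum_eq_single_of_mem (⟨s, hs⟩ : {t // t ∈ Q.parts}) (Finset.mem_univ _)
      (fun t _ hts => g_zero_gamma hdisc t.2 hs (fun h => hts (Subtype.ext h)))
  calc (∑ x ∈ s, P x) * γ = (∑ x ∈ s, P x) * γ * 1 := (mul_one _).symm
    _ = (∑ x ∈ s, P x) * γ * (∑ x ∈ s, P x) := hl
    _ = 1 * (γ * (∑ x ∈ s, P x)) := hr.symm
    _ = γ * (∑ x ∈ s, P x) := one_mul _

private lemma g_ne_zero (hP : IsPOVM P) {s : Finset X} (hs : s ∈ Q.parts) :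
    (∑ x ∈ s, P x) ≠ 0 := by
  obtain ⟨x₀, hx₀⟩ := Q.nonempty_of_mem_parts hs
  intro h
  have hx₀p : P x₀ ≠ 0 := mem_Xplus_iff.mp (Q.le hs hx₀)
  apply hx₀p
  apply mat_zero_of_mulVec
  intro v
  refine kernel_lemma hP.1 s (fun _ => 1) (fun _ => zero_le_one) v ?_ x₀ hx₀ one_ne_zero
  simp only [Complex.ofReal_one, one_smul, h, Matrix.zero_mulVec]

omit [DecidableEq X] in
private lemma g_psd (hP : IsPOVM P) (s : Finset X) : (∑ x ∈ s, P x).PosSemidef :=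
  Finset.sum_induction P Matrix.PosSemidef (fun _ _ ha hb => ha.add hb)
    Matrix.PosSemidef.zero (fun x _ => hP.1 x)

omit [DecidableEq X] in
private lemma Xplus_nonempty (hP : IsPOVM P) (hγ : IsDensity γ) : (Xplus P).Nonempty := by
  rw [Finset.nonempty_iff_ne_empty]
  intro h
  have h1 : (1 : Mat d) = 0 := by
    rw [← hP.2]
    refine Finset.sum_eq_zero fun x _ => ?_
    by_contra hx
    exact Finset.notMem_empty x (h ▸ mem_Xplus_iff.mpr hx)
  have hγ0 : γ = 0 := by rw [← mul_one γ, h1, mul_zero]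
  have h2 : Matrix.trace (0 : Mat d) = 1 := hγ0 ▸ hγ.2
  simp at h2

private lemma g_pp (hP : IsPOVM P) (hγ : IsDensity γ) (Q : Finpartition (Xplus P)) :
    IsPostProcessingOf (fun s : {t // t ∈ Q.parts} => ∑ x ∈ s.1, P x) P := by
  have hne : Q.parts.Nonempty := by
    rw [Finset.nonempty_iff_ne_empty]
    intro h
    have := Finpartition.parts_eq_empty_iff.mp h
    rw [Finset.bot_eq_empty] at this
    exact Finset.not_nonempty_empty (this ▸ Xplus_nonempty hP hγ)
  obtain ⟨s₀, hs₀⟩ := hne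
  set S₀ : {t // t ∈ Q.parts} := ⟨s₀, hs₀⟩ with hS₀
  refine ⟨fun x s => if x ∈ s.1 then 1 else (if P x = 0 ∧ s = S₀ then 1 else 0),
    fun x s => by dsimp only; split_ifs <;> norm_num, fun x => ?_, fun s => ?_⟩
  · dsimp only
    by_cases hx : P x = 0
    · have hnot : ∀ s : {t // t ∈ Q.parts}, x ∉ s.1 := fun s hxs =>
        mem_Xplus_iff.mp (Q.le s.2 hxs) hx
      simp [hnot, hx, Finset.sum_ite_eq']
    · have hxM : x ∈ Xplus P := mem_Xplus_iff.mpr hx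
      have hmem : x ∈ (Q.part x) := Q.mem_part hxM
      rw [Finset.sum_eq_single_of_mem (⟨Q.part x, Q.part_mem.mpr hxM⟩ : {t // t ∈ Q.parts})
        (Finset.mem_univ _) (fun t _ hts => ?_)]
      · rw [if_pos hmem]
      · rw [if_neg, if_neg]
        · exact fun h => hx h.1
        · intro hmem'
          exact hts (Subtype.ext (Q.eq_of_mem_parts t.2 (Q.part_mem.mpr hxM) hmem' hmem))
  · dsimp only
    have : ∀ x : X, (Complex.ofReal
          (if x ∈ s.1 then (1:ℝ) else (if P x = 0 ∧ s = S₀ then 1 else 0))) • P x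
        = if x ∈ s.1 then P x else 0 := by
      intro x
      split_ifs with h1 h2
      · norm_num
      · rw [h2.1, smul_zero]
      · norm_num
    have h2 := Finset.sum_congr rfl (fun x (_ : x ∈ (Finset.univ : Finset X)) => this x)
    rw [h2, Finset.sum_ite_mem, Finset.univ_inter]

end Grouping

/-! ### Splitting lemma for strict refinements -/

private lemma exists_split {α : Type*} [DecidableEq α] {a : Finset α} (A B : Finpartition a)
    (hf : FinerThan A B) (hne : A ≠ B) :
    ∃ s ∈ B.parts, ∃ t₁ ∈ A.parts, ∃ t₂ ∈ A.parts, t₁ ≠ t₂ ∧ t₁ ⊆ s ∧ t₂ ⊆ s := by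
  by_contra hcon
  push_neg at hcon
  have huniq : ∀ s ∈ B.parts, ∀ t₁ ∈ A.parts, ∀ t₂ ∈ A.parts, t₁ ⊆ s → t₂ ⊆ s → t₁ = t₂ := by
    intro s hs t₁ ht₁ t₂ ht₂ h1 h2
    by_contra h
    exact (hcon s hs t₁ ht₁ t₂ ht₂ h h1) h2
  have hBA : ∀ s ∈ B.parts, s ∈ A.parts := by
    intro s hs
    obtain ⟨x, hx⟩ := B.nonempty_of_mem_parts hs
    have hxa : x ∈ a := B.le hs hx
    have htA : A.part x ∈ A.parts := A.part_mem.mpr hxa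
    have hxt : x ∈ A.part x := A.mem_part hxa
    obtain ⟨s', hs', hts'⟩ := hf _ htA
    have hss' : s' = s := B.eq_of_mem_parts hs' hs (hts' hxt) hx
    have hts2 : A.part x ⊆ s := hss' ▸ hts'
    have hsub : s ⊆ A.part x := by
      intro z hz
      have hza : z ∈ a := B.le hs hz
      have hzA : A.part z ∈ A.parts := A.part_mem.mpr hza
      have hzz : z ∈ A.part z := A.mem_part hza
      obtain ⟨s'', hs'', hzs''⟩ := hf _ hzA
      have he : s'' = s := B.eq_of_mem_parts hs'' hs (hzs'' hzz) hz
      rw [huniq _ hs _ hzA _ htA (he ▸ hzs'') hts2] at hzz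
      exact hzz
    have : s = A.part x := Finset.Subset.antisymm hsub hts2
    rw [this]; exact htA
  have hAB : ∀ t ∈ A.parts, t ∈ B.parts := by
    intro t ht
    obtain ⟨s, hs, hts⟩ := hf _ ht
    have hsA : s ∈ A.parts := hBA s hs
    have : t = s := huniq s hs t ht s hsA hts (Finset.Subset.refl s)
    rw [this]; exact hs
  exact hne (Finpartition.ext (Finset.Subset.antisymm (fun t ht => hAB t ht)
    (fun s hs => hBA s hs)))

/-! ### Maximality from irreducibility -/

private lemma maximality_of_irreducible {X : Type*} [Fintype X] [DecidableEq X] {d : ℕ}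
    (P : X → Mat d) (γ : Mat d) (hP : IsPOVM P) (hγ : IsDensity γ)
    (Prt : Finpartition (Xplus P)) (hirr : IrreducibleDisconnected P γ Prt)
    (Y' : Type) [Fintype Y'] (Pv' : Y' → Mat d) (hPVM' : IsPVM Pv')
    (hcomm : ∀ y, Pv' y * γ = γ * Pv' y) (hpp : IsPostProcessingOf Pv' P) :
    IsPostProcessingOf Pv' (fun s : {t // t ∈ Prt.parts} => ∑ x ∈ s.1, P x) := by
  obtain ⟨p, hp0, hp1, hpeq⟩ := hpp
  have hherm : ∀ y, (Pv' y).IsHermitian := fun y => (hPVM'.1.1 y).1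
  have hdich : ∀ y x, Pv' y * P x = P x ∨ Pv' y * P x = 0 := by
    intro y x
    refine proj_dichotomy hP.1 hP.2 (hherm y) (hPVM'.2.1 y)
      (fun x => hp0 x y) (fun x => ?_) (hpeq y) x
    calc p x y ≤ ∑ y', p x y' := Finset.single_le_sum (fun y' _ => hp0 x y') (Finset.mem_univ y)
      _ = 1 := hp1 x
  set Yc : Y' → Finset X := fun y => (Xplus P).filter (fun x => Pv' y * P x = P x) with hYc
  have hYsub : ∀ y, Yc y ⊆ Xplus P := fun y => Finset.filter_subset _ _
  have hmemY : ∀ y x, x ∈ Yc y ↔ x ∈ Xplus P ∧ Pv' y * P x = P x := by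
    intro y x; simp [hYc]
  -- each x in the support lies in exactly one Yc y
  have hEU : ∀ x ∈ Xplus P, ∃! y, x ∈ Yc y := by
    intro x hx
    have hxne : P x ≠ 0 := mem_Xplus_iff.mp hx
    have hsum : ∑ y, Pv' y * P x = P x := by
      rw [← Finset.sum_mul, hPVM'.1.2, one_mul]
    have hex : ∃ y, Pv' y * P x = P x := by
      by_contra h
      push_neg at h
      have : ∀ y ∈ Finset.univ, Pv' y * P x = 0 := fun y _ =>
        (hdich y x).resolve_left (h y)
      exact hxne (by rw [← hsum, Finset.sum_eq_zero this])
    obtain ⟨y, hy⟩ := hex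
    refine ⟨y, (hmemY y x).mpr ⟨hx, hy⟩, ?_⟩
    intro y' hy'
    by_contra hne
    have hy'' : Pv' y' * P x = P x := ((hmemY y' x).mp hy').2
    have : P x = 0 := by
      calc P x = Pv' y' * P x := hy''.symm
        _ = Pv' y' * (Pv' y * P x) := by rw [hy]
        _ = (Pv' y' * Pv' y) * P x := by rw [mul_assoc]
        _ = 0 := by rw [hPVM'.2.2 y' y hne, zero_mul]
    exact hxne this
  -- each Pv' y is the sum of its class
  have hYeq : ∀ y, Pv' y = ∑ x ∈ Yc y, P x := by
    intro y
    have h1 : Pv' y = ∑ x, Pv' y * P x := by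
      rw [← Finset.mul_sum, hP.2, mul_one]
    rw [h1, ← Finset.sum_subset (Finset.subset_univ (Yc y)) (fun x _ hx => ?_)]
    · exact Finset.sum_congr rfl fun x hx => ((hmemY y x).mp hx).2
    · by_cases hxp : P x = 0
      · rw [hxp, mul_zero]
      · have hxX : x ∈ Xplus P := mem_Xplus_iff.mpr hxp
        refine (hdich y x).resolve_left (fun h => hx ((hmemY y x).mpr ⟨hxX, h⟩))
  -- the partition of the support into the classes Yc y
  have hYdisj : ((Finset.univ.image Yc : Finset (Finset X)) : Set (Finset X)).PairwiseDisjoint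
      id := by
    intro u hu v hv huv
    simp only [Finset.coe_image, Set.mem_image, Finset.mem_coe] at hu hv
    obtain ⟨y1, _, rfl⟩ := hu
    obtain ⟨y2, _, rfl⟩ := hv
    rw [Function.onFun, Finset.disjoint_left]
    intro x hx1 hx2
    have hxX : x ∈ Xplus P := hYsub y1 hx1
    have : y1 = y2 := ((hEU x hxX).unique hx1 hx2)
    exact huv (by rw [this])
  have hYsup : (Finset.univ.image Yc).sup id = Xplus P := by
    apply le_antisymm
    · exact Finset.sup_le fun u hu => by
        obtain ⟨y, _, rfl⟩ := Finset.mem_image.mp hu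
        exact hYsub y
    · intro x hx
      obtain ⟨y, hy, _⟩ := hEU x hx
      exact Finset.mem_sup.mpr ⟨Yc y, Finset.mem_image_of_mem Yc (Finset.mem_univ y), hy⟩
  set YPrt : Finpartition (Xplus P) :=
    Finpartition.ofErase (Finset.univ.image Yc)
      ((Finset.supIndep_iff_pairwiseDisjoint).mpr hYdisj) hYsup with hYPrt
  have hYparts : ∀ w ∈ YPrt.parts, ∃ y, w = Yc y := by
    intro w hw
    have : w ∈ Finset.univ.image Yc := Finset.mem_of_mem_erase hw
    obtain ⟨y, _, rfl⟩ := Finset.mem_image.mp this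
    exact ⟨y, rfl⟩
  set Qrt : Finpartition (Xplus P) := Prt ⊓ YPrt with hQrt
  have hQparts : ∀ u ∈ Qrt.parts, ∃ s ∈ Prt.parts, ∃ y, u = s ∩ Yc y := by
    intro u hu
    rw [hQrt, Finpartition.parts_inf] at hu
    obtain ⟨⟨s, w⟩, hsw, rfl⟩ := Finset.mem_image.mp (Finset.mem_of_mem_erase hu)
    rw [Finset.mem_product] at hsw
    obtain ⟨y, rfl⟩ := hYparts w hsw.2
    exact ⟨s, hsw.1, y, rfl⟩
  have hfiner : FinerThan Qrt Prt := fun u hu => inf_le_left (a := Prt) (b := YPrt) hu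
  -- the common refinement is γ-disconnected
  have hQdisc : GammaDisconnected P γ Qrt := by
    intro u hu u' hu' hne x hx x' hx'
    obtain ⟨s, hs, y, rfl⟩ := hQparts u hu
    obtain ⟨s', hs', y', rfl⟩ := hQparts u' hu'
    rw [Finset.mem_inter] at hx hx'
    by_cases hss : s = s'
    · have hYne : Yc y ≠ Yc y' := by
        intro h
        exact hne (by rw [hss, h])
      have hyy : y ≠ y' := fun h => hYne (by rw [h])
      have hxY : Pv' y * P x = P x := ((hmemY y x).mp hx.2).2
      have hx'Y : Pv' y' * P x' = P x' := ((hmemY y' x').mp hx'.2).2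
      have hadj : P x * Pv' y = P x := by
        have := congrArg Matrix.conjTranspose hxY
        rwa [Matrix.conjTranspose_mul, (hherm y).eq, (hP.1 x).1.eq] at this
      constructor
      · calc P x * P x' = (P x * Pv' y) * (Pv' y' * P x') := by rw [hadj, hx'Y]
          _ = P x * ((Pv' y * Pv' y') * P x') := by simp only [mul_assoc]
          _ = 0 := by rw [hPVM'.2.2 y y' hyy, zero_mul, mul_zero]
      · calc P x * γ * P x' = (P x * Pv' y) * γ * (Pv' y' * P x') := by rw [hadj, hx'Y]
          _ = P x * ((Pv' y * γ) * (Pv' y' * P x')) := by simp only [mul_assoc]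
          _ = P x * ((γ * Pv' y) * (Pv' y' * P x')) := by rw [hcomm y]
          _ = P x * (γ * ((Pv' y * Pv' y') * P x')) := by simp only [mul_assoc]
          _ = 0 := by rw [hPVM'.2.2 y y' hyy, zero_mul, mul_zero, mul_zero]
    · exact hirr.1 s hs s' hs' hss x hx.1 x' hx'.1
  -- irreducibility forces the refinement to be trivial
  have hQP : Qrt = Prt := by
    by_contra h
    exact hirr.2 Qrt hfiner h hQdisc
  have hsubY : ∀ s ∈ Prt.parts, ∃ y, s ⊆ Yc y := by
    intro s hs
    have hs' : s ∈ Qrt.parts := by rw [hQP]; exact hs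
    obtain ⟨s₁, _, y, heq⟩ := hQparts s hs'
    exact ⟨y, by rw [heq]; exact Finset.inter_subset_right⟩
  -- build the post-processing kernel
  refine ⟨fun s y => if s.1 ⊆ Yc y then 1 else 0,
    fun s y => by dsimp only; split_ifs <;> norm_num, fun s => ?_, fun y => ?_⟩
  · dsimp only
    obtain ⟨y₀, hy₀⟩ := hsubY s.1 s.2
    rw [Finset.sum_eq_single_of_mem y₀ (Finset.mem_univ _) (fun y _ hyne => ?_)]
    · rw [if_pos hy₀]
    · rw [if_neg]
      intro hsub
      obtain ⟨x, hx⟩ := Prt.nonempty_of_mem_parts s.2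
      have hxX : x ∈ Xplus P := Prt.le s.2 hx
      exact hyne ((hEU x hxX).unique (hsub hx) (hy₀ hx))
  · dsimp only
    have hterm : ∀ s : {t // t ∈ Prt.parts},
        ((if s.1 ⊆ Yc y then (1:ℝ) else 0 : ℝ) : ℂ) • (∑ x ∈ s.1, P x)
          = if s.1 ⊆ Yc y then (∑ x ∈ s.1, P x) else 0 := by
      intro s
      split_ifs <;> norm_num
    simp only [hterm]
    rw [show (∑ s : {t // t ∈ Prt.parts}, if s.1 ⊆ Yc y then (∑ x ∈ s.1, P x) else 0)
        = ∑ s ∈ Prt.parts, (if s ⊆ Yc y then (∑ x ∈ s, P x) else 0) from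
      (Finset.sum_subtype (p := fun t => t ∈ Prt.parts) Prt.parts (fun _ => Iff.rfl)
        (fun t => if t ⊆ Yc y then (∑ x ∈ t, P x) else 0)).symm]
    rw [← Finset.sum_filter]
    have hdisj2 : ((Prt.parts.filter (fun s => s ⊆ Yc y)) : Set (Finset X)).PairwiseDisjoint
        id := Prt.disjoint.subset (by
          intro u hu
          exact Finset.mem_coe.mpr (Finset.mem_of_mem_filter u (Finset.mem_coe.mp hu)))
    have hbiU : (Prt.parts.filter (fun s => s ⊆ Yc y)).biUnion id = Yc y := by
      ext z
      simp only [Finset.mem_biUnion, Finset.mem_filter, id]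
      constructor
      · rintro ⟨s, ⟨_, hsY⟩, hz⟩
        exact hsY hz
      · intro hz
        have hzX : z ∈ Xplus P := hYsub y hz
        refine ⟨Prt.part z, ⟨Prt.part_mem.mpr hzX, ?_⟩, Prt.mem_part hzX⟩
        obtain ⟨y₁, hy₁⟩ := hsubY _ (Prt.part_mem.mpr hzX)
        have : y₁ = y := (hEU z hzX).unique (hy₁ (Prt.mem_part hzX)) hz
        rwa [this] at hy₁
    rw [hYeq y]
    conv_lhs => rw [← hbiU]
    exact Finset.sum_biUnion (f := P) hdisj2

/-! ### Re-indexing along an equivalence -/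

private lemma pvm_equiv {Y Z : Type*} [Fintype Y] [Fintype Z] {d : ℕ} (e : Z ≃ Y)
    {Q : Y → Mat d} (h : IsPVM Q) : IsPVM (Q ∘ e) := by
  refine ⟨⟨fun z => h.1.1 (e z), ?_⟩, fun z => h.2.1 (e z), fun z z' hzz =>
    h.2.2 (e z) (e z') (fun hh => hzz (e.injective hh))⟩
  rw [show (∑ z, (Q ∘ e) z) = ∑ y, Q y from Equiv.sum_comp e Q]
  exact h.1.2

private lemma pp_equiv {Y Z X : Type*} [Fintype Y] [Fintype Z] [Fintype X] {d : ℕ}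
    (e : Z ≃ Y) {Q : Y → Mat d} {P : X → Mat d} (h : IsPostProcessingOf Q P) :
    IsPostProcessingOf (Q ∘ e) P := by
  obtain ⟨p, h0, h1, h2⟩ := h
  refine ⟨fun x z => p x (e z), fun x z => h0 x (e z), fun x => ?_, fun z => h2 (e z)⟩
  rw [show (∑ z, p x (e z)) = ∑ y, p x y from Equiv.sum_comp e (p x)]
  exact h1 x

/-! ### The main theorem -/

theorem grouping_is_mppp_iff_irreducible {X : Type*} [Fintype X] [DecidableEq X] {d : ℕ}
    (P : X → Mat d) (γ : Mat d) (hP : IsPOVM P) (hγ : IsDensity γ)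
    (Prt : Finpartition (Xplus P))
    (hdisc : GammaDisconnected P γ Prt) :
    IsMPPP (fun s : {t // t ∈ Prt.parts} => ∑ x ∈ s.1, P x) P γ ↔
      IrreducibleDisconnected P γ Prt := by
  constructor
  · -- MPPP ⇒ irreducible
    intro hM
    refine ⟨hdisc, ?_⟩
    intro Qrt hfine hneq hQdisc
    have hPVM' : IsPVM (fun t : {u // u ∈ Qrt.parts} => ∑ x ∈ t.1, P x) :=
      ⟨⟨fun t => g_psd hP t.1, g_sum hP Qrt⟩, fun t => g_idem hP hQdisc t.2,
        fun t t' hne' => g_zero hQdisc t.2 t'.2 (fun h => hne' (Subtype.ext h))⟩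
    have hcomm' : ∀ t : {u // u ∈ Qrt.parts}, (∑ x ∈ t.1, P x) * γ = γ * (∑ x ∈ t.1, P x) :=
      fun t => g_comm hP hQdisc t.2
    set e := (Fintype.equivFin {u // u ∈ Qrt.parts}).symm with he
    obtain ⟨q, hq0, hq1, hqeq⟩ := hM.2.2.2 _
      ((fun t : {u // u ∈ Qrt.parts} => ∑ x ∈ t.1, P x) ∘ e)
      (pvm_equiv e hPVM') (fun i => hcomm' (e i)) (pp_equiv e (g_pp hP hγ Qrt))
    obtain ⟨s, hs, t₁, ht₁, t₂, ht₂, hne12, hsub1, hsub2⟩ := exists_split Qrt Prt hfine hneq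
    have key : ∀ t, ∀ ht : t ∈ Qrt.parts, t ⊆ s → (∑ x ∈ t, P x) = ∑ x ∈ s, P x := by
      intro t ht hts
      set i := e.symm ⟨t, ht⟩ with hi
      have hPvi : ((fun t : {u // u ∈ Qrt.parts} => ∑ x ∈ t.1, P x) ∘ e) i
          = ∑ x ∈ t, P x := by
        simp [hi]
      have h3 := hqeq i
      rw [hPvi] at h3
      -- multiplying by Π_s on the right picks out the coefficient
      have h4 : (∑ x ∈ t, P x) * (∑ x ∈ s, P x)
          = (q ⟨s, hs⟩ i : ℂ) • (∑ x ∈ s, P x) := by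
        rw [h3, Finset.sum_mul]
        have hsm : ∀ s' : {u // u ∈ Prt.parts},
            ((q s' i : ℂ) • (∑ x ∈ s'.1, P x)) * (∑ x ∈ s, P x)
              = (q s' i : ℂ) • ((∑ x ∈ s'.1, P x) * (∑ x ∈ s, P x)) :=
          fun s' => smul_mul_assoc _ _ _
        simp_rw [hsm]
        rw [Finset.sum_eq_single_of_mem (⟨s, hs⟩ : {u // u ∈ Prt.parts})
          (Finset.mem_univ _) (fun s' _ hss' => ?_)]
        · rw [g_idem hP hdisc hs]
        · rw [g_zero hdisc s'.2 hs (fun h => hss' (Subtype.ext h)), smul_zero]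
      have hone : (∑ x ∈ t, P x) * (1 : Mat d) = (∑ x ∈ t, P x) * (∑ x ∈ s, P x) := by
        rw [← g_sum hP Prt, Finset.mul_sum]
        refine Finset.sum_eq_single_of_mem (⟨s, hs⟩ : {u // u ∈ Prt.parts})
          (Finset.mem_univ _) (fun s' _ hss' => ?_)
        rw [Finset.sum_mul_sum]
        exact Finset.sum_eq_zero fun x hx => Finset.sum_eq_zero fun x' hx' =>
          (hdisc s hs s'.1 s'.2 (fun h => hss' (Subtype.ext h.symm)) x (hts hx) x' hx').1
      have h2 : (∑ x ∈ t, P x) * (∑ x ∈ s, P x) = ∑ x ∈ t, P x := by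
        rw [← hone, mul_one]
      set c := q ⟨s, hs⟩ i with hc
      have h5 : (∑ x ∈ t, P x) = (c : ℂ) • (∑ x ∈ s, P x) := h2.symm.trans h4
      have hidem : (∑ x ∈ t, P x) * (∑ x ∈ t, P x) = ∑ x ∈ t, P x :=
        g_idem hP hQdisc ht
      have hsne : (∑ x ∈ s, P x) ≠ 0 := g_ne_zero hP hs
      have htne : (∑ x ∈ t, P x) ≠ 0 := g_ne_zero hP ht
      have hcc : ((c : ℂ) * c) • (∑ x ∈ s, P x) = (c : ℂ) • (∑ x ∈ s, P x) := by
        have h6 : ((c : ℂ) • (∑ x ∈ s, P x)) * ((c : ℂ) • (∑ x ∈ s, P x))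
            = (c : ℂ) • (∑ x ∈ s, P x) := by rw [← h5, hidem]
        calc ((c : ℂ) * c) • (∑ x ∈ s, P x)
            = ((c : ℂ) * c) • ((∑ x ∈ s, P x) * (∑ x ∈ s, P x)) := by
              rw [g_idem hP hdisc hs]
          _ = ((c : ℂ) • (∑ x ∈ s, P x)) * ((c : ℂ) • (∑ x ∈ s, P x)) := by
              rw [smul_mul_smul_comm]
          _ = (c : ℂ) • (∑ x ∈ s, P x) := h6
      have hc2 : (c : ℂ) * c = c := by
        have h7 : ((c : ℂ) * c - c) • (∑ x ∈ s, P x) = 0 := by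
          rw [sub_smul, hcc, sub_self]
        rcases smul_eq_zero.mp h7 with h8 | h8
        · exact sub_eq_zero.mp h8
        · exact absurd h8 hsne
      have hcne : (c : ℂ) ≠ 0 := by
        intro h0
        apply htne
        rw [h5, h0, zero_smul]
      have hc1 : (c : ℂ) = 1 := by
        have := mul_left_cancel₀ hcne (hc2.trans (mul_one (c : ℂ)).symm)
        exact this
      rw [h5, hc1, one_smul]
    have e1 := key t₁ ht₁ hsub1
    have e2 := key t₂ ht₂ hsub2
    have horth := g_zero hQdisc ht₁ ht₂ hne12
    rw [e1, e2, g_idem hP hdisc hs] at horth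
    exact g_ne_zero hP hs horth
  · -- irreducible ⇒ MPPP
    intro hirr
    refine ⟨⟨⟨fun s => g_psd hP s.1, g_sum hP Prt⟩, fun s => g_idem hP hdisc s.2,
      fun s s' hne' => g_zero hdisc s.2 s'.2 (fun h => hne' (Subtype.ext h))⟩,
      fun s => g_comm hP hdisc s.2, g_pp hP hγ Prt, ?_⟩
    intro Y' _ Pv' hPVM' hcomm' hpp'
    exact maximality_of_irreducible P γ hP hγ Prt hirr Y' Pv' hPVM' hcomm' hpp'
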